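/- arXiv:1902.05750 — 2 statements merged into one kernel-verified Lean document; each statement's English description precedes it below -/
import Mathlib

section
/- Let C > 0 be fixed. Then (2/(ℓ(ℓ+1))) · ∫_{C/ℓ}^{π/2} (P_ℓ(cos θ) sin θ)² (P_ℓ(cos θ) cos θ − P_ℓ''(cos θ) sin² θ) sin θ dθ = O(1) as ℓ → ∞; that is, there exist K > 0 and ℓ₀ ∈ ℕ such that for all integers ℓ ≥ ℓ₀ the absolute value of this quantity is at most K. -/
set_option maxRecDepth 4000


open Real intervalIntegral

/-- The `n`-th Legendre polynomial via Rodrigues' formula: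
`P_n(t) = (1/(2^n n!)) dⁿ/dtⁿ (t² − 1)ⁿ`. -/
noncomputable def legendreP (n : ℕ) (t : ℝ) : ℝ :=
  (1 / ((2 : ℝ) ^ n * (n.factorial : ℝ))) *
    iteratedDeriv n (fun s : ℝ => (s ^ 2 - 1) ^ n) t


section LegendreAux
open Polynomial

noncomputable def legR (ℓ : ℕ) : ℝ[X] := (X ^ 2 - 1) ^ ℓ
noncomputable def legS (ℓ n : ℕ) : ℝ[X] := derivative^[n] (legR ℓ)

lemma legS_succ (ℓ n : ℕ) : legS ℓ (n+1) = derivative (legS ℓ n) := by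
  simp [legS, Function.iterate_succ_apply']

lemma base (ℓ : ℕ) (hℓ : 1 ≤ ℓ) :
    (X ^ 2 - 1) * legS ℓ 1 = 2 * (ℓ : ℝ[X]) * X * legS ℓ 0 := by
  have h : legS ℓ 1 = derivative ((X ^ 2 - 1 : ℝ[X]) ^ ℓ) := by simp [legS, legR]
  rw [h, derivative_pow]
  simp only [legS, legR, Function.iterate_zero_apply]
  have hpow : (X ^ 2 - 1 : ℝ[X]) * ((X^2-1) ^ (ℓ - 1)) = (X^2-1) ^ ℓ := by
    rw [← pow_succ']; congr 1; omega
  have hd : derivative (X ^ 2 - 1 : ℝ[X]) = 2 * X := by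
    simp [derivative_pow, map_ofNat]
  rw [hd, show (X^2-1:ℝ[X]) * (Polynomial.C (ℓ:ℝ) * (X^2-1)^(ℓ-1) * (2*X))
      = Polynomial.C (ℓ:ℝ) * ((X^2-1) * (X^2-1)^(ℓ-1)) * (2*X) from by ring,
    hpow, Polynomial.C_eq_natCast]
  ring

lemma keyU (ℓ : ℕ) (hℓ : 1 ≤ ℓ) (n : ℕ) :
    (X ^ 2 - 1) * legS ℓ (n+2) + (2*(n:ℝ[X]) + 2 - 2*(ℓ:ℝ[X])) * (X * legS ℓ (n+1))
      = (2*(ℓ:ℝ[X])*((n:ℝ[X])+1) - ((n:ℝ[X])+1)*(n:ℝ[X])) * legS ℓ n := by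
  induction n with
  | zero =>
    have h := congrArg derivative (base ℓ hℓ)
    simp only [derivative_mul, derivative_sub, derivative_pow, derivative_X, derivative_one,
      derivative_natCast, derivative_ofNat, Polynomial.C_eq_natCast, ← legS_succ] at h
    rw [show (0+1 : ℕ) = 1 from rfl, show (1+1 : ℕ) = 2 from rfl] at h
    push_cast at h ⊢
    linear_combination h
  | succ n ih =>
    have h := congrArg derivative ih
    simp only [derivative_mul, derivative_add, derivative_sub, derivative_pow, derivative_X,
      derivative_one, derivative_natCast, derivative_ofNat, Polynomial.C_eq_natCast,
      ← legS_succ] at h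
    rw [show n+1+1 = n+2 from rfl, show n+2+1 = n+3 from rfl] at h
    push_cast at h ⊢
    linear_combination h


lemma ode_poly (ℓ : ℕ) (hℓ : 1 ≤ ℓ) :
    (X ^ 2 - 1) * legS ℓ (ℓ+2) + 2 * X * legS ℓ (ℓ+1)
      = ((ℓ:ℝ[X]) * ((ℓ:ℝ[X])+1)) * legS ℓ ℓ := by
  have h := keyU ℓ hℓ ℓ
  linear_combination h

noncomputable def legP (ℓ : ℕ) : ℝ[X] :=
  Polynomial.C (1 / ((2:ℝ) ^ ℓ * (ℓ.factorial : ℝ))) * legS ℓ ℓ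

-- bridge: iteratedDeriv of polynomial eval
lemma iteratedDeriv_eval (p : ℝ[X]) (n : ℕ) :
    iteratedDeriv n (fun s : ℝ => p.eval s) = fun t => (derivative^[n] p).eval t := by
  induction n with
  | zero => simp
  | succ n ih =>
    rw [iteratedDeriv_succ, ih, Function.iterate_succ_apply']
    funext t
    exact Polynomial.deriv _

lemma legendreP_eq (ℓ : ℕ) : legendreP ℓ = fun t => (legP ℓ).eval t := by
  funext t
  have h1 : (fun s : ℝ => (s ^ 2 - 1) ^ ℓ) = fun s : ℝ => (legR ℓ).eval s := by
    funext s; simp [legR]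
  rw [legendreP, h1, iteratedDeriv_eval]
  simp [legP, legS, mul_comm]

lemma deriv_legendreP (ℓ : ℕ) :
    deriv (legendreP ℓ) = fun t => (derivative (legP ℓ)).eval t := by
  rw [legendreP_eq]; funext t; exact Polynomial.deriv _

lemma deriv2_legendreP (ℓ : ℕ) :
    deriv (deriv (legendreP ℓ)) = fun t => (derivative (derivative (legP ℓ))).eval t := by
  rw [deriv_legendreP]; funext t; exact Polynomial.deriv _

lemma legP_deriv_S (ℓ : ℕ) : derivative (legP ℓ)
    = Polynomial.C (1 / ((2:ℝ) ^ ℓ * (ℓ.factorial : ℝ))) * legS ℓ (ℓ+1) := by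
  rw [legP, derivative_C_mul, ← legS_succ]

lemma legP_deriv2_S (ℓ : ℕ) : derivative (derivative (legP ℓ))
    = Polynomial.C (1 / ((2:ℝ) ^ ℓ * (ℓ.factorial : ℝ))) * legS ℓ (ℓ+2) := by
  rw [legP_deriv_S, derivative_C_mul, ← legS_succ]

-- pointwise ODE
lemma ode_eval (ℓ : ℕ) (hℓ : 1 ≤ ℓ) (t : ℝ) :
    (t ^ 2 - 1) * (derivative (derivative (legP ℓ))).eval t
      + 2 * t * (derivative (legP ℓ)).eval t
      = (ℓ:ℝ) * ((ℓ:ℝ)+1) * (legP ℓ).eval t := by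
  have h := congrArg (Polynomial.eval t) (ode_poly ℓ hℓ)
  simp only [eval_add, eval_mul, eval_sub, eval_pow, eval_X, eval_one, eval_natCast,
    eval_ofNat] at h
  rw [legP_deriv2_S, legP_deriv_S, legP]
  simp only [eval_mul, eval_C]
  linear_combination (1 / ((2:ℝ) ^ ℓ * (ℓ.factorial : ℝ))) * h

open Finset in
lemma eval_one_S (ℓ : ℕ) : (legS ℓ ℓ).eval 1 = (ℓ.factorial : ℝ) * 2 ^ ℓ := by
  have hR : legR ℓ = (X - Polynomial.C 1) ^ ℓ * (X + Polynomial.C 1) ^ ℓ := by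
    rw [legR, ← mul_pow]; congr 1; simp; ring
  rw [legS, hR, iterate_derivative_mul, eval_finset_sum,
    sum_eq_single_of_mem 0 (mem_range.mpr ℓ.succ_pos)]
  · rw [ℓ.choose_zero_right, one_smul, eval_mul, ℓ.sub_zero, iterate_derivative_X_sub_pow_self]
    simp only [eval_natCast, eval_pow, eval_add, eval_X, eval_C]
    norm_num
  · intro b hb hb0
    have h1 : derivative^[ℓ - b] ((X - Polynomial.C 1 : ℝ[X]) ^ ℓ)
        = ℓ.descFactorial (ℓ - b) • (X - Polynomial.C 1) ^ b := by
      rw [iterate_derivative_X_sub_pow, Nat.sub_sub_self (mem_range_succ_iff.mp hb)]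
    rw [h1]
    simp [hb0]

open Finset in
lemma eval_negone_S (ℓ : ℕ) : (legS ℓ ℓ).eval (-1) = (ℓ.factorial : ℝ) * (-2) ^ ℓ := by
  have hR : legR ℓ = (X + Polynomial.C 1) ^ ℓ * (X - Polynomial.C 1) ^ ℓ := by
    rw [legR, ← mul_pow]; congr 1; simp; ring
  rw [legS, hR, iterate_derivative_mul, eval_finset_sum,
    sum_eq_single_of_mem 0 (mem_range.mpr ℓ.succ_pos)]
  · rw [ℓ.choose_zero_right, one_smul, eval_mul, ℓ.sub_zero]
    have : derivative^[ℓ] ((X + Polynomial.C 1 : ℝ[X]) ^ ℓ) = (ℓ.factorial : ℝ[X]) := by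
      rw [iterate_derivative_X_add_pow, ℓ.sub_self, pow_zero, ℓ.descFactorial_self]
      simp
    rw [this]
    simp only [eval_mul, eval_natCast, eval_pow, eval_sub, eval_X, eval_C]
    norm_num
  · intro b hb hb0
    have h1 : derivative^[ℓ - b] ((X + Polynomial.C 1 : ℝ[X]) ^ ℓ)
        = ℓ.descFactorial (ℓ - b) • (X + Polynomial.C 1) ^ b := by
      rw [iterate_derivative_X_add_pow, Nat.sub_sub_self (mem_range_succ_iff.mp hb)]
    rw [h1]
    simp [hb0]

lemma eval_one_legP (ℓ : ℕ) : (legP ℓ).eval 1 = 1 := by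
  have h2 : ((2:ℝ) ^ ℓ * (ℓ.factorial : ℝ)) ≠ 0 := by positivity
  rw [legP, eval_mul, eval_C, eval_one_S]
  field_simp

lemma eval_negone_legP (ℓ : ℕ) : (legP ℓ).eval (-1) = (-1) ^ ℓ := by
  have h2 : ((2:ℝ) ^ ℓ * (ℓ.factorial : ℝ)) ≠ 0 := by positivity
  rw [legP, eval_mul, eval_C, eval_negone_S]
  rw [show ((-2:ℝ))^ℓ = (-1)^ℓ * 2^ℓ by rw [← neg_one_mul, mul_pow]]
  field_simp

lemma energy_le (ℓ : ℕ) (hℓ : 1 ≤ ℓ) {t : ℝ} (ht : t ∈ Set.Icc (-1:ℝ) 1) :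
    (ℓ:ℝ)*((ℓ:ℝ)+1) * ((legP ℓ).eval t)^2 + (1 - t^2) * ((derivative (legP ℓ)).eval t)^2
      ≤ (ℓ:ℝ)*((ℓ:ℝ)+1) := by
  set N : ℝ := (ℓ:ℝ)*((ℓ:ℝ)+1) with hN
  set h : ℝ → ℝ := fun t =>
    N * ((legP ℓ).eval t)^2 + (1 - t^2) * ((derivative (legP ℓ)).eval t)^2 with hh
  have hd : ∀ s : ℝ, HasDerivAt h (2*s*((derivative (legP ℓ)).eval s)^2) s := by
    intro s
    have h1 := (legP ℓ).hasDerivAt s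
    have h2 := (derivative (legP ℓ)).hasDerivAt s
    have hA : HasDerivAt (fun u : ℝ => N * ((legP ℓ).eval u)^2)
        (N * (2 * (legP ℓ).eval s ^ 1 * (derivative (legP ℓ)).eval s)) s :=
      (h1.pow 2).const_mul N
    have hB : HasDerivAt (fun u : ℝ => (1:ℝ) - u^2) (-(2 * s ^ 1)) s :=
      (hasDerivAt_pow 2 s).const_sub 1
    have hC := hB.mul (h2.pow 2)
    have := hA.add hC
    refine this.congr_deriv ?_
    have ode := ode_eval ℓ hℓ s
    push_cast
    simp only [Pi.pow_apply]
    linear_combination (-2 * (derivative (legP ℓ)).eval s) * ode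
  have hcont : Continuous h := by
    apply Continuous.add
    · exact continuous_const.mul ((legP ℓ).continuous.pow 2)
    · exact (continuous_const.sub (continuous_pow 2)).mul
        ((derivative (legP ℓ)).continuous.pow 2)
  have hdiff : Differentiable ℝ h := fun s => (hd s).differentiableAt
  have hderiv : ∀ s, deriv h s = 2*s*((derivative (legP ℓ)).eval s)^2 :=
    fun s => (hd s).deriv
  have h1 : h 1 = N := by
    simp [hh, eval_one_legP]
  have hm1 : h (-1) = N := by
    have : ((legP ℓ).eval (-1))^2 = 1 := by
      rw [eval_negone_legP, ← pow_mul, mul_comm, pow_mul]; norm_num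
    simp [hh, this]
  have key : h t ≤ N := by
    rcases le_or_gt 0 t with h0 | h0
    · have hmono : MonotoneOn h (Set.Icc (0:ℝ) 1) := by
        apply monotoneOn_of_deriv_nonneg (convex_Icc 0 1) hcont.continuousOn
          (hdiff.differentiableOn)
        intro s hs
        rw [hderiv]
        rw [interior_Icc] at hs
        have : (0:ℝ) ≤ s := le_of_lt hs.1
        positivity
      have := hmono (Set.mem_Icc.mpr ⟨h0, ht.2⟩) (Set.mem_Icc.mpr ⟨zero_le_one, le_refl 1⟩) ht.2
      rw [h1] at this; exact this
    · have hanti : AntitoneOn h (Set.Icc (-1:ℝ) 0) := by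
        apply antitoneOn_of_deriv_nonpos (convex_Icc (-1) 0) hcont.continuousOn
          (hdiff.differentiableOn)
        intro s hs
        rw [hderiv]
        rw [interior_Icc] at hs
        have hs0 : s ≤ 0 := le_of_lt hs.2
        nlinarith [sq_nonneg ((derivative (legP ℓ)).eval s)]
      have := hanti (Set.mem_Icc.mpr ⟨le_refl (-1:ℝ), by linarith⟩)
        (Set.mem_Icc.mpr ⟨ht.1, le_of_lt h0⟩) ht.1
      rw [hm1] at this; exact this
  exact key

lemma legP_sq_le_one (ℓ : ℕ) (hℓ : 1 ≤ ℓ) {t : ℝ} (ht : t ∈ Set.Icc (-1:ℝ) 1) :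
    ((legP ℓ).eval t)^2 ≤ 1 := by
  have h := energy_le ℓ hℓ ht
  have hN : (1:ℝ) ≤ (ℓ:ℝ)*((ℓ:ℝ)+1) := by
    have : (1:ℝ) ≤ (ℓ:ℝ) := by exact_mod_cast hℓ
    nlinarith
  have h2 : (0:ℝ) ≤ (1 - t^2) * ((derivative (legP ℓ)).eval t)^2 := by
    have := ht.1; have := ht.2
    have : (0:ℝ) ≤ 1 - t^2 := by nlinarith
    positivity
  nlinarith

lemma legP_deriv_sq_le (ℓ : ℕ) (hℓ : 1 ≤ ℓ) {t : ℝ} (ht : t ∈ Set.Icc (-1:ℝ) 1) :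
    (1 - t^2) * ((derivative (legP ℓ)).eval t)^2 ≤ (ℓ:ℝ)*((ℓ:ℝ)+1) := by
  have h := energy_le ℓ hℓ ht
  have h0 : (0:ℝ) ≤ (ℓ:ℝ)*((ℓ:ℝ)+1)*((legP ℓ).eval t)^2 := by positivity
  linarith

end LegendreAux

theorem legendre_sq_second_deriv_integral_bounded (C : ℝ) (hC : 0 < C) :
    ∃ K > 0, ∃ ℓ₀ : ℕ, ∀ ℓ : ℕ, ℓ₀ ≤ ℓ →
      |(2 / ((ℓ : ℝ) * ((ℓ : ℝ) + 1))) *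
        ∫ θ in (C / (ℓ : ℝ))..(π / 2),
          (legendreP ℓ (Real.cos θ) * Real.sin θ) ^ 2 *
            (legendreP ℓ (Real.cos θ) * Real.cos θ -
              deriv (deriv (legendreP ℓ)) (Real.cos θ) * Real.sin θ ^ 2) *
            Real.sin θ| ≤ K := by
  refine ⟨4 * π, by positivity, max 1 ⌈C⌉₊, ?_⟩
  intro ℓ hℓ
  have hℓ1 : 1 ≤ ℓ := le_trans (le_max_left _ _) hℓ
  have hℓR : (1:ℝ) ≤ (ℓ:ℝ) := by exact_mod_cast hℓ1
  have hCl : C / (ℓ:ℝ) ≤ 1 := by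
    rw [div_le_one (by linarith)]
    calc C ≤ (⌈C⌉₊ : ℝ) := Nat.le_ceil C
      _ ≤ ((max 1 ⌈C⌉₊ : ℕ):ℝ) := by exact_mod_cast le_max_right 1 ⌈C⌉₊
      _ ≤ (ℓ:ℝ) := by exact_mod_cast hℓ
  have hpi : (3:ℝ) < π := Real.pi_gt_three
  have hCl2 : C / (ℓ:ℝ) ≤ π/2 := le_trans hCl (by linarith)
  have hCl0 : 0 < C / (ℓ:ℝ) := div_pos hC (by linarith)
  set N : ℝ := (ℓ:ℝ) * ((ℓ:ℝ)+1) with hNdef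
  have hN1 : (1:ℝ) ≤ N := by nlinarith
  have hNpos : (0:ℝ) < N := by linarith
  have hbound : ∀ θ ∈ Set.uIoc (C/(ℓ:ℝ)) (π/2),
      ‖(legendreP ℓ (Real.cos θ) * Real.sin θ) ^ 2 *
        (legendreP ℓ (Real.cos θ) * Real.cos θ -
          deriv (deriv (legendreP ℓ)) (Real.cos θ) * Real.sin θ ^ 2) *
        Real.sin θ‖ ≤ 4*N := by
    intro θ hθ
    rw [Set.uIoc_of_le hCl2] at hθ
    have hθ0 : 0 < θ := lt_trans hCl0 hθ.1
    have hθπ : θ ≤ π/2 := hθ.2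
    have hs0 : 0 ≤ Real.sin θ :=
      Real.sin_nonneg_of_nonneg_of_le_pi (le_of_lt hθ0) (by linarith)
    have hs1 : Real.sin θ ≤ 1 := Real.sin_le_one θ
    have ht0 : 0 ≤ Real.cos θ := Real.cos_nonneg_of_mem_Icc ⟨by linarith, hθπ⟩
    have ht1 : Real.cos θ ≤ 1 := Real.cos_le_one θ
    have htm : Real.cos θ ∈ Set.Icc (-1:ℝ) 1 := ⟨by linarith, ht1⟩
    set t := Real.cos θ with hts
    set s := Real.sin θ with hss
    have hs2 : s^2 = 1 - t^2 := Real.sin_sq θ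
    rw [deriv2_legendreP]
    simp only [legendreP_eq]
    set Q := (legP ℓ).eval t with hQd
    set A := (Polynomial.derivative (legP ℓ)).eval t with hAd
    set B := (Polynomial.derivative (Polynomial.derivative (legP ℓ))).eval t with hBd
    have ode := ode_eval ℓ hℓ1 t
    rw [← hQd, ← hAd, ← hBd, ← hNdef] at ode
    have hQ2 : Q^2 ≤ 1 := legP_sq_le_one ℓ hℓ1 htm
    have hA2 : (1-t^2)*A^2 ≤ N := legP_deriv_sq_le ℓ hℓ1 htm
    have e1 : |Q| ≤ 1 := by
      rw [← Real.sqrt_one, ← Real.sqrt_sq_eq_abs]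
      exact Real.sqrt_le_sqrt hQ2
    have esA : |s*A| ≤ N := by
      have hsq : (s*A)^2 ≤ N := by rw [mul_pow, hs2]; nlinarith
      rw [← Real.sqrt_sq_eq_abs]
      calc Real.sqrt ((s*A)^2) ≤ Real.sqrt (N^2) := by
            apply Real.sqrt_le_sqrt; nlinarith
        _ = N := Real.sqrt_sq (le_of_lt hNpos)
    have hBs : B * s^2 = 2*t*A - N*Q := by rw [hs2]; linarith [ode]
    have hE : (Q*s)^2 * (Q*t - B*s^2) * s
        = (Q^3*s^3*t + N*Q^3*s^3) + (-(2*t*(Q^2*s^2)*(s*A))) := by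
      linear_combination (-((Q*s)^2*s)) * hBs
    have p1 : |Q|^3 ≤ 1 := pow_le_one₀ (abs_nonneg Q) e1
    have p2 : s^3 ≤ 1 := pow_le_one₀ hs0 hs1
    have p3 : (0:ℝ) ≤ |Q|^3 := by positivity
    have p4 : (0:ℝ) ≤ s^3 := by positivity
    have p5 : |Q|^3 * s^3 ≤ 1 := mul_le_one₀ p1 p4 p2
    have b1 : |Q^3*s^3*t| ≤ 1 := by
      rw [abs_mul, abs_mul, abs_pow, abs_pow, abs_of_nonneg hs0, abs_of_nonneg ht0]
      exact mul_le_one₀ p5 ht0 ht1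
    have b2 : |N*Q^3*s^3| ≤ N := by
      rw [abs_mul, abs_mul, abs_pow, abs_pow, abs_of_nonneg hs0,
        abs_of_nonneg (le_of_lt hNpos)]
      calc N * |Q|^3 * s^3 = N * (|Q|^3 * s^3) := by ring
        _ ≤ N * 1 := mul_le_mul_of_nonneg_left p5 (le_of_lt hNpos)
        _ = N := mul_one N
    have b3 : |2*t*(Q^2*s^2)*(s*A)| ≤ 2*N := by
      rw [abs_mul, abs_mul, abs_of_nonneg (by positivity : (0:ℝ) ≤ 2*t),
        abs_of_nonneg (by positivity : (0:ℝ) ≤ Q^2*s^2)]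
      have q1 : Q^2*s^2 ≤ 1 := mul_le_one₀ hQ2 (sq_nonneg s) (pow_le_one₀ hs0 hs1)
      have q2 : t*(Q^2*s^2) ≤ 1 := mul_le_one₀ ht1 (by positivity) q1
      have q3 : (0:ℝ) ≤ t*(Q^2*s^2) := by positivity
      calc 2*t*(Q^2*s^2)*|s*A| = 2*((t*(Q^2*s^2))*|s*A|) := by ring
        _ ≤ 2*(1*N) := by
            apply mul_le_mul_of_nonneg_left _ (by norm_num : (0:ℝ) ≤ 2)
            exact mul_le_mul q2 esA (abs_nonneg _) zero_le_one
        _ = 2*N := by ring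
    rw [Real.norm_eq_abs]
    calc |(Q*s)^2 * (Q*t - B*s^2) * s|
        = |(Q^3*s^3*t + N*Q^3*s^3) + (-(2*t*(Q^2*s^2)*(s*A)))| := by rw [hE]
      _ ≤ |Q^3*s^3*t + N*Q^3*s^3| + |(-(2*t*(Q^2*s^2)*(s*A)))| := abs_add_le _ _
      _ ≤ (|Q^3*s^3*t| + |N*Q^3*s^3|) + |(-(2*t*(Q^2*s^2)*(s*A)))| := by
          gcongr
          exact abs_add_le _ _
      _ ≤ (1 + N) + 2*N := by
          rw [abs_neg]
          exact add_le_add (add_le_add b1 b2) b3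
      _ ≤ 4*N := by linarith
  have hint := intervalIntegral.norm_integral_le_of_norm_le_const hbound
  rw [Real.norm_eq_abs] at hint
  have habs : |π/2 - C/(ℓ:ℝ)| ≤ π/2 := by
    rw [abs_of_nonneg (by linarith)]; linarith
  have hI : |∫ θ in (C / (ℓ:ℝ))..(π / 2),
      (legendreP ℓ (Real.cos θ) * Real.sin θ) ^ 2 *
        (legendreP ℓ (Real.cos θ) * Real.cos θ -
          deriv (deriv (legendreP ℓ)) (Real.cos θ) * Real.sin θ ^ 2) *
        Real.sin θ| ≤ 4*N*(π/2) := by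
    refine le_trans hint ?_
    have : (0:ℝ) ≤ 4*N := by linarith
    exact mul_le_mul_of_nonneg_left habs this
  rw [abs_mul, abs_of_nonneg (by positivity : (0:ℝ) ≤ 2 / N)]
  calc 2/N * |∫ θ in (C / (ℓ:ℝ))..(π / 2),
      (legendreP ℓ (Real.cos θ) * Real.sin θ) ^ 2 *
        (legendreP ℓ (Real.cos θ) * Real.cos θ -
          deriv (deriv (legendreP ℓ)) (Real.cos θ) * Real.sin θ ^ 2) *
        Real.sin θ|
      ≤ 2/N * (4*N*(π/2)) := by
        exact mul_le_mul_of_nonneg_left hI (by positivity)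
    _ = 4*π := by field_simp
end

section
/- Let C > 0 be fixed. Then, as ℓ → ∞, ∫_{C/ℓ}^{π/2} (4/(ℓ²(ℓ+1)²)) (P_ℓ(cos θ) cos θ − P_ℓ''(cos θ) sin² θ)² · (4/(ℓ²(ℓ+1)²)) P_ℓ'(cos θ)² sin θ dθ = O(1/ℓ²); that is, there exist K > 0 and ℓ₀ ∈ ℕ such that for all integers ℓ ≥ ℓ₀ the absolute value of this integral is at most K/ℓ². -/
open Real intervalIntegral

namespace LegAux
open Polynomial MeasureTheory



noncomputable def u (n : ℕ) : ℝ[X] := ((X : ℝ[X]) ^ 2 - 1) ^ n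
noncomputable def R (n : ℕ) : ℝ[X] := derivative^[n] (u n)
noncomputable def Q (n : ℕ) : ℝ[X] := C (1 / ((2:ℝ)^n * n.factorial)) * R n

lemma key0 (n : ℕ) : ((X:ℝ[X])^2 - 1) * derivative (u n) = ((2*n : ℕ):ℝ[X]) * (X * u n) := by
  cases n with
  | zero => simp [u]
  | succ m =>
    simp only [u, derivative_pow, derivative_sub, derivative_one, derivative_X_pow, derivative_X,
      C_eq_natCast]
    push_cast
    ring

lemma iter_C_mul (a : ℝ) (p : ℝ[X]) (k : ℕ) :
    derivative^[k] (C a * p) = C a * derivative^[k] p := by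
  induction k generalizing p with
  | zero => simp
  | succ k ih =>
    rw [Function.iterate_succ_apply, derivative_C_mul, ih, ← Function.iterate_succ_apply]

lemma iter_natCast_mul (m : ℕ) (p : ℝ[X]) (k : ℕ) :
    derivative^[k] ((m:ℝ[X]) * p) = (m:ℝ[X]) * derivative^[k] p := by
  rw [← C_eq_natCast, iter_C_mul]

lemma itX (p : ℝ[X]) (k : ℕ) :
    derivative^[k+1] (X * p) =
      X * derivative^[k+1] p + ((k:ℝ[X])+1) * derivative^[k] p := by
  induction k with
  | zero => simp [derivative_mul]; ring
  | succ k ih =>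
    rw [Function.iterate_succ_apply', ih,
      Function.iterate_succ_apply' derivative (k+1), Function.iterate_succ_apply' derivative k]
    simp only [derivative_add, derivative_mul, derivative_X, derivative_natCast,
      derivative_one, derivative_add]
    push_cast
    ring

lemma itU (p : ℝ[X]) (k : ℕ) :
    derivative^[k+1] (((X:ℝ[X])^2 - 1) * derivative p) =
      ((X:ℝ[X])^2 - 1) * derivative^[k+2] p
        + 2*((k:ℝ[X])+1) * (X * derivative^[k+1] p)
        + ((k:ℝ[X])+1)*(k:ℝ[X]) * derivative^[k] p := by
  induction k with
  | zero =>
    simp only [Function.iterate_one, derivative_mul, derivative_sub, derivative_one,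
      derivative_X_pow, C_eq_natCast, Function.iterate_succ_apply, Function.iterate_zero_apply,
      Function.iterate_one]
    push_cast
    ring
  | succ k ih =>
    rw [Function.iterate_succ_apply', ih,
      show k+1+2 = (k+2)+1 from rfl, show k+1+1 = (k+1)+1 from rfl,
      Function.iterate_succ_apply' derivative (k+2), Function.iterate_succ_apply' derivative (k+1),
      Function.iterate_succ_apply' derivative k]
    simp only [derivative_add, derivative_mul, derivative_sub, derivative_one,
      derivative_X_pow, C_eq_natCast, derivative_natCast, derivative_X, derivative_ofNat]
    push_cast
    ring

/-- The Legendre ODE in polynomial form. -/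
lemma odeR (n : ℕ) :
    ((X:ℝ[X])^2 - 1) * derivative (derivative (R n)) + 2 * (X * derivative (R n))
      = (n:ℝ[X])*((n:ℝ[X])+1) * R n := by
  have h := congrArg (derivative^[n+1]) (key0 n)
  rw [itU (u n) n, iter_natCast_mul (2*n), itX (u n) n] at h
  have hR1 : derivative^[n+1] (u n) = derivative (R n) := by
    rw [R, Function.iterate_succ_apply' derivative n]
  have hR2 : derivative^[n+2] (u n) = derivative (derivative (R n)) := by
    rw [show n+2 = (n+1)+1 from rfl, Function.iterate_succ_apply' derivative (n+1), hR1]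
  rw [hR1, hR2, show derivative^[n] (u n) = R n from rfl] at h
  push_cast at h
  linear_combination h


lemma deriv_shift1 (n : ℕ) (g : ℝ[X]) :
    derivative (((X:ℝ[X]) - 1)^(n+1) * g)
      = ((X:ℝ[X])-1)^n * ((((n:ℝ[X]))+1) * g + ((X:ℝ[X])-1) * derivative g) := by
  rw [derivative_mul, derivative_pow]
  simp only [derivative_sub, derivative_X, derivative_one, C_eq_natCast, Nat.add_sub_cancel]
  push_cast
  ring

lemma deriv_shift2 (n : ℕ) (g : ℝ[X]) :
    derivative (((X:ℝ[X]) + 1)^(n+1) * g)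
      = ((X:ℝ[X])+1)^n * ((((n:ℝ[X]))+1) * g + ((X:ℝ[X])+1) * derivative g) := by
  rw [derivative_mul, derivative_pow]
  simp only [derivative_add, derivative_X, derivative_one, C_eq_natCast, Nat.add_sub_cancel]
  push_cast
  ring

lemma iter_eval_one (n : ℕ) (g : ℝ[X]) :
    (derivative^[n] (((X:ℝ[X]) - 1)^n * g)).eval 1 = n.factorial * g.eval 1 := by
  induction n generalizing g with
  | zero => simp
  | succ n ih =>
    rw [Function.iterate_succ_apply, deriv_shift1, ih]
    simp [Nat.factorial_succ]
    push_cast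
    ring

lemma iter_eval_neg_one (n : ℕ) (g : ℝ[X]) :
    (derivative^[n] (((X:ℝ[X]) + 1)^n * g)).eval (-1) = n.factorial * g.eval (-1) := by
  induction n generalizing g with
  | zero => simp
  | succ n ih =>
    rw [Function.iterate_succ_apply, deriv_shift2, ih]
    simp [Nat.factorial_succ]
    push_cast
    ring

lemma factor_one (j : ℕ) : ∀ (n : ℕ), j ≤ n → ∀ g : ℝ[X],
    ∃ h : ℝ[X], derivative^[j] (((X:ℝ[X]) - 1)^n * g) = ((X:ℝ[X])-1)^(n-j) * h := by
  induction j with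
  | zero => intro n _ g; exact ⟨g, by simp⟩
  | succ j ih =>
    rintro (_|m) hj g
    · omega
    obtain ⟨h, hh⟩ := ih m (by omega) ((((m:ℝ[X]))+1) * g + ((X:ℝ[X])-1) * derivative g)
    exact ⟨h, by rw [Function.iterate_succ_apply, deriv_shift1, hh, Nat.succ_sub_succ]⟩

lemma factor_neg_one (j : ℕ) : ∀ (n : ℕ), j ≤ n → ∀ g : ℝ[X],
    ∃ h : ℝ[X], derivative^[j] (((X:ℝ[X]) + 1)^n * g) = ((X:ℝ[X])+1)^(n-j) * h := by
  induction j with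
  | zero => intro n _ g; exact ⟨g, by simp⟩
  | succ j ih =>
    rintro (_|m) hj g
    · omega
    obtain ⟨h, hh⟩ := ih m (by omega) ((((m:ℝ[X]))+1) * g + ((X:ℝ[X])+1) * derivative g)
    exact ⟨h, by rw [Function.iterate_succ_apply, deriv_shift2, hh, Nat.succ_sub_succ]⟩

lemma u_factor (n : ℕ) : (((X:ℝ[X])^2 - 1))^n = ((X:ℝ[X])-1)^n * ((X:ℝ[X])+1)^n := by
  rw [← mul_pow]; ring_nf



lemma pint (f g : ℝ[X]) : IntervalIntegrable (fun t => f.eval t * g.eval t)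
    volume (-1:ℝ) 1 :=
  ((f.continuous_aeval).mul (g.continuous_aeval)).intervalIntegrable _ _

/-- Integration by parts for polynomials on [-1,1]. -/
lemma parts (f g : ℝ[X]) :
    ∫ t in (-1:ℝ)..1, (derivative f).eval t * g.eval t
      = f.eval 1 * g.eval 1 - f.eval (-1) * g.eval (-1)
        - ∫ t in (-1:ℝ)..1, f.eval t * (derivative g).eval t := by
  have h := intervalIntegral.integral_deriv_mul_eq_sub (a := (-1:ℝ)) (b := 1)
    (u := fun x => f.eval x) (v := fun x => g.eval x)
    (u' := fun x => (derivative f).eval x) (v' := fun x => (derivative g).eval x)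
    (fun x _ => f.hasDerivAt x) (fun x _ => g.hasDerivAt x)
    ((f.derivative.continuous_aeval).intervalIntegrable _ _)
    ((g.derivative.continuous_aeval).intervalIntegrable _ _)
  rw [intervalIntegral.integral_add (pint (derivative f) g) (pint f (derivative g))] at h
  linarith


lemma R_eval_one (n : ℕ) : (R n).eval 1 = n.factorial * 2^n := by
  have : R n = derivative^[n] (((X:ℝ[X])-1)^n * ((X:ℝ[X])+1)^n) := by
    rw [R, u, u_factor]
  rw [this, iter_eval_one]
  norm_num

lemma R_eval_neg_one (n : ℕ) : (R n).eval (-1) = n.factorial * (-2)^n := by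
  have : R n = derivative^[n] (((X:ℝ[X])+1)^n * ((X:ℝ[X])-1)^n) := by
    rw [R, u, u_factor]; ring_nf
  rw [this, iter_eval_neg_one]
  norm_num

lemma cQ_ne (n : ℕ) : ((2:ℝ)^n * n.factorial) ≠ 0 := by
  positivity

lemma Q_eval_one (n : ℕ) : (Q n).eval 1 = 1 := by
  rw [Q, eval_mul, eval_C, R_eval_one]
  field_simp

lemma Q_eval_neg_one (n : ℕ) : (Q n).eval (-1) = (-1)^n := by
  rw [Q, eval_mul, eval_C, R_eval_neg_one]
  have : ((-2:ℝ))^n = (-1)^n * 2^n := by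
    rw [← mul_pow]; norm_num
  rw [this]
  field_simp

lemma vanish_one {j n : ℕ} (h : j < n) : (derivative^[j] (u n)).eval 1 = 0 := by
  obtain ⟨g, hg⟩ := factor_one j n h.le (((X:ℝ[X])+1)^n)
  rw [u, u_factor, hg, eval_mul, eval_pow]
  have : n - j ≠ 0 := by omega
  simp [this]

lemma vanish_neg_one {j n : ℕ} (h : j < n) : (derivative^[j] (u n)).eval (-1) = 0 := by
  have hu : u n = ((X:ℝ[X])+1)^n * ((X:ℝ[X])-1)^n := by rw [u, u_factor]; ring
  obtain ⟨g, hg⟩ := factor_neg_one j n h.le (((X:ℝ[X])-1)^n)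
  rw [hu, hg, eval_mul, eval_pow]
  have : n - j ≠ 0 := by omega
  simp [this]

lemma ortho_aux (n : ℕ) (q : ℝ[X]) : ∀ k, k ≤ n →
    ∫ t in (-1:ℝ)..1, (R n).eval t * q.eval t
      = (-1:ℝ)^k * ∫ t in (-1:ℝ)..1,
          (derivative^[n-k] (u n)).eval t * (derivative^[k] q).eval t := by
  intro k
  induction k with
  | zero => intro _; simp [R]
  | succ k ih =>
    intro hk
    rw [ih (by omega)]
    have hm : n - k = (n - (k+1)) + 1 := by omega
    have hD : derivative^[n-k] (u n) = derivative (derivative^[n-(k+1)] (u n)) := by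
      rw [hm, Function.iterate_succ_apply']
    rw [hD, parts (derivative^[n-(k+1)] (u n)) (derivative^[k] q),
      vanish_one (by omega), vanish_neg_one (by omega),
      show derivative ((derivative^[k]) q) = derivative^[k+1] q from
        (Function.iterate_succ_apply' derivative k q).symm]
    ring

lemma ortho (n : ℕ) (q : ℝ[X]) (hq : q.natDegree < n) :
    ∫ t in (-1:ℝ)..1, (R n).eval t * q.eval t = 0 := by
  rw [ortho_aux n q n le_rfl, iterate_derivative_eq_zero hq]
  simp

lemma natDegree_R_le (n : ℕ) : (R n).natDegree ≤ n := by
  have h1 : (u n).natDegree ≤ 2 * n := by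
    refine le_trans natDegree_pow_le ?_
    have : ((X:ℝ[X])^2 - 1).natDegree ≤ 2 := by
      refine le_trans (natDegree_sub_le _ _) ?_
      simp
    calc n * ((X:ℝ[X])^2-1).natDegree ≤ n * 2 := Nat.mul_le_mul_left n this
      _ = 2 * n := by ring
  calc (R n).natDegree ≤ (u n).natDegree - n := natDegree_iterate_derivative _ _
    _ ≤ 2*n - n := by omega
    _ = n := by omega

/-- ODE for Q, evaluated. -/
lemma odeQ_eval (n : ℕ) (t : ℝ) :
    (t^2 - 1) * (derivative (derivative (Q n))).eval t + 2*t*(derivative (Q n)).eval t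
      = ((n:ℝ)*((n:ℝ)+1)) * (Q n).eval t := by
  have h := congrArg (fun p : ℝ[X] => p.eval t) (odeR n)
  simp only [eval_add, eval_mul, eval_sub, eval_pow, eval_X, eval_one, eval_natCast,
    eval_ofNat] at h
  have hQ : Q n = C (1 / ((2:ℝ)^n * n.factorial)) * R n := rfl
  rw [hQ]
  simp only [derivative_C_mul, eval_mul, eval_C]
  set c := 1 / ((2:ℝ)^n * n.factorial)
  linear_combination c * h

lemma Q'_eval_one (n : ℕ) : (derivative (Q n)).eval 1 = (n:ℝ)*((n:ℝ)+1)/2 := by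
  have h := odeQ_eval n 1
  rw [Q_eval_one] at h
  norm_num at h
  linarith

lemma Q'_eval_neg_one (n : ℕ) :
    (derivative (Q n)).eval (-1) = -((n:ℝ)*((n:ℝ)+1)/2) * (-1)^n := by
  have h := odeQ_eval n (-1)
  rw [Q_eval_neg_one] at h
  norm_num at h
  linarith

lemma Qnorm (n : ℕ) (hn : 1 ≤ n) :
    ∫ t in (-1:ℝ)..1, ((derivative (Q n)).eval t)^2 = (n:ℝ)*((n:ℝ)+1) := by
  have hparts := parts (Q n) (derivative (Q n))
  have horth : ∫ t in (-1:ℝ)..1, (Q n).eval t * (derivative (derivative (Q n))).eval t = 0 := by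
    have hdeg : (derivative (derivative (R n))).natDegree < n := by
      have h1 := natDegree_derivative_le (R := ℝ) (derivative (R n))
      have h2 := natDegree_derivative_le (R := ℝ) (R n)
      have h3 := natDegree_R_le n
      omega
    have h0 := ortho n (derivative (derivative (R n))) hdeg
    have hQ : Q n = C (1 / ((2:ℝ)^n * n.factorial)) * R n := rfl
    set c := 1 / ((2:ℝ)^n * n.factorial)
    have : (fun t => (Q n).eval t * (derivative (derivative (Q n))).eval t)
        = fun t => (c*c) * ((R n).eval t * (derivative (derivative (R n))).eval t) := by
      funext t
      rw [hQ]
      simp only [derivative_C_mul, eval_mul, eval_C]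
      ring
    rw [intervalIntegral.integral_congr (fun t _ => congrFun this t),
      intervalIntegral.integral_const_mul, h0, mul_zero]
  have hsq : (fun t => (derivative (Q n)).eval t * (derivative (Q n)).eval t)
      = fun t => ((derivative (Q n)).eval t)^2 := by funext t; ring
  rw [intervalIntegral.integral_congr (fun t _ => (congrFun hsq t).symm), hparts, horth,
    Q_eval_one, Q_eval_neg_one, Q'_eval_one, Q'_eval_neg_one]
  have : ((-1:ℝ))^n * ((-1:ℝ))^n = 1 := by
    rw [← pow_add]
    simp [pow_add, ← two_mul]
  ring_nf
  ring_nf at this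
  nlinarith [this]


lemma Q_bound (n : ℕ) (hn : 1 ≤ n)
    (ode : ∀ t : ℝ, (t^2 - 1) * (derivative (derivative (Q n))).eval t
        + 2*t*(derivative (Q n)).eval t = ((n:ℝ)*((n:ℝ)+1)) * (Q n).eval t)
    (h1 : (Q n).eval 1 = 1) (hm1 : (Q n).eval (-1) = (-1)^n)
    {t : ℝ} (ht : t ∈ Set.Icc (-1:ℝ) 1) :
    ((Q n).eval t)^2 ≤ 1 ∧
      (1 - t^2) * ((derivative (Q n)).eval t)^2 ≤ (n:ℝ)*((n:ℝ)+1) := by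
  have hn1 : (1:ℝ) ≤ (n:ℝ) := by exact_mod_cast hn
  have hlam0 : (0:ℝ) < ((n:ℝ)*((n:ℝ)+1)) := by nlinarith
  set G : ℝ → ℝ := fun s => ((Q n).eval s)^2
      + (1 - s^2) * ((derivative (Q n)).eval s)^2 / ((n:ℝ)*((n:ℝ)+1)) with hG
  have hDer : ∀ x : ℝ, HasDerivAt G ((2*x/((n:ℝ)*((n:ℝ)+1))) * ((derivative (Q n)).eval x)^2) x := by
    intro x
    have h1' := ((Q n).hasDerivAt x).pow 2
    have h2' := (((Q n).derivative.hasDerivAt x).pow 2)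
    have h3' : HasDerivAt (fun s : ℝ => 1 - s^2) (-(2*x)) x := by
      simpa using ((hasDerivAt_pow 2 x).const_sub 1)
    have h4' := ((h3'.mul h2').div_const ((n:ℝ)*((n:ℝ)+1)))
    have h5' := h1'.add h4'
    have h6 : HasDerivAt G _ x := h5'
    convert h6 using 1
    push_cast
    simp only [Pi.pow_apply, Nat.add_one_sub_one, pow_one]
    have hne : ((n:ℝ)*((n:ℝ)+1)) ≠ 0 := ne_of_gt hlam0
    have hinv : ((n:ℝ)*((n:ℝ)+1)) * ((n:ℝ)*((n:ℝ)+1))⁻¹ = 1 := mul_inv_cancel₀ hne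
    have hode2 := congrArg (HMul.hMul ((2:ℝ) * (Q n).derivative.eval x / ((n:ℝ)*((n:ℝ)+1)))) (ode x)
    have hinv2 := congrArg (HMul.hMul ((2:ℝ) * (Q n).derivative.eval x * (Q n).eval x)) hinv
    linear_combination hode2 + hinv2
  have hcont : Continuous G := by
    apply Continuous.add
    · exact ((Q n).continuous_aeval).pow 2
    · exact (((continuous_const.sub (continuous_pow 2)).mul
        (((Q n).derivative.continuous_aeval).pow 2)).div_const ((n:ℝ)*((n:ℝ)+1)))
  have hdiff : Differentiable ℝ G := fun x => (hDer x).differentiableAt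
  have hmono : MonotoneOn G (Set.Icc (0:ℝ) 1) := by
    apply monotoneOn_of_deriv_nonneg (convex_Icc 0 1) hcont.continuousOn
      (hdiff.differentiableOn)
    intro x hx
    rw [interior_Icc] at hx
    rw [(hDer x).deriv]
    have hx0 : 0 ≤ x := le_of_lt hx.1
    positivity
  have hanti : AntitoneOn G (Set.Icc (-1:ℝ) 0) := by
    apply antitoneOn_of_deriv_nonpos (convex_Icc (-1) 0) hcont.continuousOn
      (hdiff.differentiableOn)
    intro x hx
    rw [interior_Icc] at hx
    rw [(hDer x).deriv]
    have hx0 : x ≤ 0 := le_of_lt hx.2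
    have hsq : 0 ≤ ((derivative (Q n)).eval x)^2 := sq_nonneg _
    have : 2*x/((n:ℝ)*((n:ℝ)+1)) ≤ 0 := by
      apply div_nonpos_of_nonpos_of_nonneg <;> nlinarith
    nlinarith
  have hG1 : G 1 = 1 := by simp [hG, h1]
  have hGm1 : G (-1) = 1 := by
    have hsq : ((-1:ℝ)^n)^2 = 1 := by
      rw [← pow_mul, mul_comm, pow_mul]; norm_num
    simp [hG, hm1, hsq]
  have hGle : G t ≤ 1 := by
    rcases le_or_gt 0 t with h | h
    · have := hmono (Set.mem_Icc.2 ⟨h, ht.2⟩) (Set.mem_Icc.2 ⟨zero_le_one, le_rfl⟩) ht.2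
      rwa [hG1] at this
    · have := hanti (Set.mem_Icc.2 ⟨le_rfl, by norm_num⟩) (Set.mem_Icc.2 ⟨ht.1, h.le⟩) ht.1
      rwa [hGm1] at this
  have ht2 : 0 ≤ 1 - t^2 := by
    have h1t := ht.1; have h2t := ht.2; nlinarith
  have hterm2 : 0 ≤ (1 - t^2) * ((derivative (Q n)).eval t)^2 / ((n:ℝ)*((n:ℝ)+1)) := by positivity
  constructor
  · have : ((Q n).eval t)^2 ≤ G t := by
      simp only [hG]; linarith
    linarith
  · have : (1 - t^2) * ((derivative (Q n)).eval t)^2 / ((n:ℝ)*((n:ℝ)+1)) ≤ G t := by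
      simp only [hG]; nlinarith [sq_nonneg ((Q n).eval t)]
    have := this.trans hGle
    rw [div_le_one hlam0] at this
    exact this


lemma Q_bound' (n : ℕ) (hn : 1 ≤ n) {t : ℝ} (ht : t ∈ Set.Icc (-1:ℝ) 1) :
    ((Q n).eval t)^2 ≤ 1 ∧
      (1 - t^2) * ((derivative (Q n)).eval t)^2 ≤ (n:ℝ)*((n:ℝ)+1) :=
  Q_bound n hn (odeQ_eval n) (Q_eval_one n) (Q_eval_neg_one n) ht

lemma iteratedDeriv_polyeval (p : ℝ[X]) (k : ℕ) :
    iteratedDeriv k (fun x => p.eval x) = fun x => (derivative^[k] p).eval x := by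
  induction k with
  | zero => simp
  | succ k ih =>
    rw [iteratedDeriv_succ, ih, Function.iterate_succ_apply']
    funext x
    exact ((derivative^[k] p).hasDerivAt x).deriv

lemma legendreP_eq (n : ℕ) : legendreP n = fun t => (Q n).eval t := by
  funext t
  have hu : (fun s : ℝ => (s^2 - 1)^n) = fun s => (u n).eval s := by
    funext s; simp [u]
  rw [legendreP, hu, iteratedDeriv_polyeval]
  rw [Q, eval_mul, eval_C, R]

lemma deriv_legendreP (n : ℕ) :
    deriv (legendreP n) = fun t => (derivative (Q n)).eval t := by
  rw [legendreP_eq]; funext t; exact ((Q n).hasDerivAt t).deriv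

lemma deriv2_legendreP (n : ℕ) :
    deriv (deriv (legendreP n)) = fun t => (derivative (derivative (Q n))).eval t := by
  rw [deriv_legendreP]; funext t; exact ((derivative (Q n)).hasDerivAt t).deriv

lemma cov (p : ℝ[X]) (a b : ℝ) :
    ∫ θ in a..b, Real.sin θ * (p.eval (Real.cos θ))^2
      = ∫ t in (Real.cos b)..(Real.cos a), (p.eval t)^2 := by
  have h := intervalIntegral.integral_comp_smul_deriv (a := a) (b := b)
    (f := Real.cos) (f' := fun x => -Real.sin x) (g := fun t => (p.eval t)^2)
    (fun x _ => Real.hasDerivAt_cos x) (Continuous.continuousOn (by continuity))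
    ((p.continuous_aeval).pow 2)
  simp only [smul_eq_mul, Function.comp] at h
  have h2 : ∫ θ in a..b, Real.sin θ * (p.eval (Real.cos θ))^2
      = -∫ θ in a..b, -Real.sin θ * (p.eval (Real.cos θ))^2 := by
    rw [← intervalIntegral.integral_neg]
    congr 1
    funext θ
    ring
  rw [h2, h, intervalIntegral.integral_symm, neg_neg]

end LegAux

set_option maxHeartbeats 1000000 in
open Polynomial MeasureTheory in
theorem legendre_second_deriv_sq_deriv_sq_small (C : ℝ) (hC : 0 < C) :
    ∃ K > 0, ∃ ℓ₀ : ℕ, ∀ ℓ : ℕ, ℓ₀ ≤ ℓ →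
      |∫ θ in (C / (ℓ : ℝ))..(π / 2),
          (4 / ((ℓ : ℝ) ^ 2 * ((ℓ : ℝ) + 1) ^ 2)) *
            (legendreP ℓ (Real.cos θ) * Real.cos θ -
              deriv (deriv (legendreP ℓ)) (Real.cos θ) * Real.sin θ ^ 2) ^ 2 *
            ((4 / ((ℓ : ℝ) ^ 2 * ((ℓ : ℝ) + 1) ^ 2)) *
              (deriv (legendreP ℓ) (Real.cos θ)) ^ 2) *
            Real.sin θ| ≤ K / (ℓ : ℝ) ^ 2 := by
  have hπ : (0:ℝ) < π := Real.pi_pos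
  refine ⟨128 + 32*π^2/C^2, by positivity, ⌈2*C/π⌉₊ + 1, ?_⟩
  intro n hn
  have hn1 : 1 ≤ n := le_trans (by omega) hn
  have hnR : (1:ℝ) ≤ (n:ℝ) := by exact_mod_cast hn1
  have hnpos : (0:ℝ) < (n:ℝ) := by linarith
  have hceil : 2*C/π ≤ (n:ℝ) := by
    calc 2*C/π ≤ (⌈2*C/π⌉₊ : ℝ) := Nat.le_ceil _
      _ ≤ (n:ℝ) := by exact_mod_cast Nat.le_of_succ_le hn
  have h2C : 2*C ≤ π*(n:ℝ) := by
    rw [div_le_iff₀ hπ] at hceil; linarith [hceil]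
  have hab : C/(n:ℝ) ≤ π/2 := by
    rw [div_le_div_iff₀ hnpos (by norm_num : (0:ℝ) < 2)]
    linarith
  have ha0 : 0 < C/(n:ℝ) := by positivity
  rw [LegAux.deriv2_legendreP, LegAux.deriv_legendreP, LegAux.legendreP_eq]
  simp only []
  set lam : ℝ := (n:ℝ)*((n:ℝ)+1) with hlamdef
  have hlam1 : (1:ℝ) ≤ lam := by nlinarith
  have hlampos : (0:ℝ) < lam := by linarith
  have hlamn2 : (n:ℝ)^2 ≤ lam := by nlinarith
  have hA2 : (n:ℝ)^2*((n:ℝ)+1)^2 = lam^2 := by rw [hlamdef]; ring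
  set B : ℝ := 32 + 8*π^2/C^2 with hBdef
  have hB0 : 0 < B := by positivity
  set e0 : ℝ → ℝ := fun θ => (LegAux.Q n).eval (Real.cos θ) with he0
  set e1 : ℝ → ℝ := fun θ => (derivative (LegAux.Q n)).eval (Real.cos θ) with he1
  set e2 : ℝ → ℝ := fun θ => (derivative (derivative (LegAux.Q n))).eval (Real.cos θ) with he2
  have hce0 : Continuous e0 := ((LegAux.Q n).continuous).comp Real.continuous_cos
  have hce1 : Continuous e1 := ((derivative (LegAux.Q n)).continuous).comp Real.continuous_cos
  have hce2 : Continuous e2 :=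
    ((derivative (derivative (LegAux.Q n))).continuous).comp Real.continuous_cos
  set f : ℝ → ℝ := fun θ => 4 / ((n:ℝ)^2*((n:ℝ)+1)^2) * (e0 θ * Real.cos θ - e2 θ * Real.sin θ^2)^2 *
      (4 / ((n:ℝ)^2*((n:ℝ)+1)^2) * (e1 θ)^2) * Real.sin θ with hfdef
  have hcf : Continuous f := by
    apply Continuous.mul _ Real.continuous_sin
    apply Continuous.mul
    · exact continuous_const.mul (((hce0.mul Real.continuous_cos).sub
        (hce2.mul (Real.continuous_sin.pow 2))).pow 2)
    · exact continuous_const.mul (hce1.pow 2)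
  set g : ℝ → ℝ := fun θ => (B * (4/lam^2)) * (Real.sin θ * (e1 θ)^2) with hgdef
  have hcg : Continuous g := continuous_const.mul (Real.continuous_sin.mul (hce1.pow 2))
  clear_value lam B e0 e1 e2 f g
  have key : ∀ θ ∈ Set.Icc (C/(n:ℝ)) (π/2), |f θ| ≤ g θ := by
    intro θ hθ
    obtain ⟨hθ1, hθ2⟩ := hθ
    have hθ0 : 0 ≤ θ := le_trans ha0.le hθ1
    have hsθ : 2/π * θ ≤ Real.sin θ := Real.mul_le_sin hθ0 hθ2
    have hslow : 2*C/(π*(n:ℝ)) ≤ Real.sin θ := by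
      refine le_trans ?_ hsθ
      have h1 : 2*C/(π*(n:ℝ)) = 2/π * (C/(n:ℝ)) := by field_simp
      rw [h1]
      exact mul_le_mul_of_nonneg_left hθ1 (by positivity)
    have hs0 : 0 < Real.sin θ := lt_of_lt_of_le (by positivity) hslow
    have hc1 : Real.cos θ ≤ 1 := Real.cos_le_one θ
    have hcm1 : -1 ≤ Real.cos θ := Real.neg_one_le_cos θ
    have hpyth : Real.sin θ^2 = 1 - Real.cos θ^2 := Real.sin_sq θ
    obtain ⟨hQ1, hQ'⟩ := LegAux.Q_bound' n hn1 (Set.mem_Icc.2 ⟨hcm1, hc1⟩)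
    have hode := LegAux.odeQ_eval n (Real.cos θ)
    have hQ1' : (e0 θ)^2 ≤ 1 := by rw [he0]; exact hQ1
    have hQ'' : (1 - Real.cos θ^2) * (e1 θ)^2 ≤ lam := by rw [he1, hlamdef]; exact hQ'
    -- rewrite the middle factor via the ODE
    have hM : e0 θ * Real.cos θ - e2 θ * Real.sin θ^2
        = Real.cos θ * e0 θ + lam * e0 θ - 2*Real.cos θ*(e1 θ) := by
      rw [he0, he1, he2, hpyth, hlamdef]
      linear_combination hode
    have hq1E : (e1 θ)^2 * (2*C/(π*(n:ℝ)))^2 ≤ lam := by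
      calc (e1 θ)^2 * (2*C/(π*(n:ℝ)))^2 ≤ (e1 θ)^2 * Real.sin θ^2 := by
            apply mul_le_mul_of_nonneg_left _ (sq_nonneg _)
            apply sq_le_sq' _ hslow
            have : (0:ℝ) ≤ 2*C/(π*(n:ℝ)) := by positivity
            linarith
        _ ≤ lam := by rw [hpyth]; linarith [hQ'']
    have hq1b : 32*(e1 θ)^2 ≤ 8*π^2*lam^2/C^2 := by
      have e2' : (e1 θ)^2 ≤ lam * (π^2*(n:ℝ)^2/(4*C^2)) := by
        have h := mul_le_mul_of_nonneg_right hq1E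
          (by positivity : (0:ℝ) ≤ π^2*(n:ℝ)^2/(4*C^2))
        calc (e1 θ)^2 = (e1 θ)^2 * (2*C/(π*(n:ℝ)))^2 * (π^2*(n:ℝ)^2/(4*C^2)) := by
              field_simp
              ring
          _ ≤ lam * (π^2*(n:ℝ)^2/(4*C^2)) := h
      calc 32*(e1 θ)^2 ≤ 32*(lam * (π^2*(n:ℝ)^2/(4*C^2))) := by linarith
        _ = 8*π^2*((n:ℝ)^2*lam)/C^2 := by ring
        _ ≤ 8*π^2*lam^2/C^2 := by
            rw [div_le_div_iff_of_pos_right (by positivity : (0:ℝ) < C^2)]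
            nlinarith [mul_nonneg (mul_nonneg (by positivity : (0:ℝ) ≤ 8*π^2) hlampos.le)
              (sub_nonneg.2 hlamn2)]
    have hMsq : (e0 θ * Real.cos θ - e2 θ * Real.sin θ^2)^2 ≤ 8*lam^2 + 8*(e1 θ)^2 := by
      rw [hM]
      have h_a : (Real.cos θ + lam)^2 ≤ 4*lam^2 := by nlinarith [hc1, hcm1, hlam1]
      have h_a2 : (Real.cos θ*e0 θ + lam*e0 θ)^2 ≤ 4*lam^2 := by
        have hsp : (Real.cos θ*e0 θ + lam*e0 θ)^2 = (Real.cos θ + lam)^2 * (e0 θ)^2 := by ring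
        rw [hsp]
        calc (Real.cos θ + lam)^2 * (e0 θ)^2 ≤ 4*lam^2 * 1 :=
              mul_le_mul h_a hQ1' (sq_nonneg _) (by positivity)
          _ = 4*lam^2 := by ring
      have h_b : (2*Real.cos θ*e1 θ)^2 ≤ 4*(e1 θ)^2 := by
        nlinarith [hc1, hcm1, sq_nonneg (e1 θ)]
      nlinarith [sq_nonneg (Real.cos θ*e0 θ + lam*e0 θ + 2*Real.cos θ*e1 θ), h_a2, h_b]
    have hF1 : 4 / ((n:ℝ)^2*((n:ℝ)+1)^2) * (e0 θ * Real.cos θ - e2 θ * Real.sin θ^2)^2 ≤ B := by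
      rw [hA2, hBdef]
      rw [div_mul_eq_mul_div, div_le_iff₀ (by positivity : (0:ℝ) < lam^2)]
      calc 4 * (e0 θ * Real.cos θ - e2 θ * Real.sin θ^2)^2
          ≤ 4 * (8*lam^2 + 8*(e1 θ)^2) := by linarith
        _ = 32*lam^2 + 4*(8*(e1 θ)^2) := by ring
        _ ≤ 32*lam^2 + (8*π^2*lam^2/C^2) := by linarith [hq1b]
        _ = (32 + 8*π^2/C^2) * lam^2 := by field_simp
    have hfg : |f θ| = 4 / ((n:ℝ)^2*((n:ℝ)+1)^2) * (e0 θ * Real.cos θ - e2 θ * Real.sin θ^2)^2 *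
        (4 / ((n:ℝ)^2*((n:ℝ)+1)^2) * (e1 θ)^2) * Real.sin θ := by
      rw [hfdef]
      apply abs_of_nonneg
      apply mul_nonneg _ hs0.le
      apply mul_nonneg (by positivity) (by positivity)
    rw [hfg, hgdef]
    have h2 : (0:ℝ) ≤ 4 / ((n:ℝ)^2*((n:ℝ)+1)^2) * (e1 θ)^2 := by positivity
    calc 4 / ((n:ℝ)^2*((n:ℝ)+1)^2) * (e0 θ * Real.cos θ - e2 θ * Real.sin θ^2)^2 *
          (4 / ((n:ℝ)^2*((n:ℝ)+1)^2) * (e1 θ)^2) * Real.sin θ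
        ≤ B * (4 / ((n:ℝ)^2*((n:ℝ)+1)^2) * (e1 θ)^2) * Real.sin θ := by
          apply mul_le_mul_of_nonneg_right _ hs0.le
          exact mul_le_mul_of_nonneg_right hF1 h2
      _ = B * (4/lam^2) * (Real.sin θ * (e1 θ)^2) := by rw [hA2]; ring
  -- now the integral estimates
  have haleb : C/(n:ℝ) ≤ π/2 := hab
  calc |∫ θ in (C/(n:ℝ))..(π/2), f θ|
      ≤ ∫ θ in (C/(n:ℝ))..(π/2), |f θ| :=
        intervalIntegral.abs_integral_le_integral_abs haleb
    _ ≤ ∫ θ in (C/(n:ℝ))..(π/2), g θ := by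
        apply intervalIntegral.integral_mono_on haleb
          (hcf.abs.intervalIntegrable _ _) (hcg.intervalIntegrable _ _) key
    _ = (B * (4/lam^2)) * ∫ θ in (C/(n:ℝ))..(π/2), Real.sin θ * (e1 θ)^2 := by
        rw [hgdef, intervalIntegral.integral_const_mul]
    _ = (B * (4/lam^2)) * ∫ θ in (C/(n:ℝ))..(π/2),
          Real.sin θ * ((derivative (LegAux.Q n)).eval (Real.cos θ))^2 := by
        rw [he1]
    _ = (B * (4/lam^2)) * ∫ t in Real.cos (π/2)..Real.cos (C/(n:ℝ)),
          ((derivative (LegAux.Q n)).eval t)^2 := by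
        rw [LegAux.cov]
    _ ≤ (B * (4/lam^2)) * ((n:ℝ)*((n:ℝ)+1)) := by
        apply mul_le_mul_of_nonneg_left _ (by positivity)
        rw [← LegAux.Qnorm n hn1, Real.cos_pi_div_two]
        apply intervalIntegral.integral_mono_interval (by norm_num)
          (Real.cos_nonneg_of_mem_Icc ⟨by linarith, hab⟩) (Real.cos_le_one _)
          (Filter.Eventually.of_forall (fun t => sq_nonneg _))
          ((((derivative (LegAux.Q n)).continuous).pow 2).intervalIntegrable _ _)
    _ ≤ (128 + 32*π^2/C^2) / (n:ℝ)^2 := by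
        have h1 : (B * (4/lam^2)) * lam = 4*B/lam := by field_simp
        rw [← hlamdef, h1]
        calc 4*B/lam ≤ 4*B/(n:ℝ)^2 := by
              apply div_le_div_of_nonneg_left (by positivity) (by positivity) hlamn2
          _ = (128 + 32*π^2/C^2) / (n:ℝ)^2 := by rw [hBdef]; ring_nf
end
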